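/- Let (F_k)_{k∈[C]} be function classes from X to ℝ, G a set of classifiers from X to [C], and F_G = {x ↦ f_{g(x)}(x) : g ∈ G, f_k ∈ F_k} the piecewise class. Then for any sample x_1,...,x_n and ε > 0, the L_∞ empirical covering number satisfies N(ε, F_G, d_∞) ≤ Π_G(n) · ∏_{k=1}^C N(ε, F_k, d_∞), where Π_G(n) is the growth function of G. -/

import Mathlib

/-- Empirical L_q pseudo-metric on a sample. -/
noncomputable def empDist {Z : Type*} {n : ℕ} (q : ℝ) (z : Fin n → Z)
    (f g : Z → ℝ) : ℝ :=
  ((n : ℝ)⁻¹ * ∑ i, |f (z i) - g (z i)| ^ q) ^ (1 / q)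

/-- Empirical L_∞ pseudo-metric on a sample. -/
noncomputable def empDistInf {Z : Type*} {n : ℕ} (z : Fin n → Z)
    (f g : Z → ℝ) : ℝ :=
  ⨆ i, |f (z i) - g (z i)|

/-- Covering number: smallest cardinality of a proper ε-net of F
(distance at most ε). -/
noncomputable def covN {α : Type*} (ε : ℝ) (F : Set α) (d : α → α → ℝ) : ℕ∞ :=
  sInf {m : ℕ∞ | ∃ H : Finset α, ↑H ⊆ F ∧ (∀ f ∈ F, ∃ h ∈ H, d f h ≤ ε) ∧
    (H.card : ℕ∞) = m}

lemma covN_le_card {α : Type*} (ε : ℝ) (F : Set α) (d : α → α → ℝ)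
    (H : Finset α) (hsub : ↑H ⊆ F) (hnet : ∀ f ∈ F, ∃ h ∈ H, d f h ≤ ε) :
    covN ε F d ≤ H.card :=
  sInf_le ⟨H, hsub, hnet, rfl⟩

lemma covN_empty {α : Type*} (ε : ℝ) (d : α → α → ℝ) :
    covN ε (∅ : Set α) d = 0 := by
  refine le_antisymm ?_ zero_le
  simpa using covN_le_card ε ∅ d ∅ (by simp) (by simp)

lemma covN_ne_zero {α : Type*} (ε : ℝ) (F : Set α) (d : α → α → ℝ)
    (hF : F.Nonempty) : covN ε F d ≠ 0 := by
  intro h0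
  have h1 : covN ε F d < 1 := by simp [h0]
  obtain ⟨m, hm, hm1⟩ := sInf_lt_iff.mp h1
  obtain ⟨H, hsub, hnet, hcard⟩ := hm
  have hm0 : m = 0 := ENat.lt_one_iff_eq_zero.mp hm1
  subst hm0
  have : H = ∅ := by simpa [Finset.card_eq_zero] using (by exact_mod_cast hcard : H.card = 0)
  obtain ⟨f, hf⟩ := hF
  obtain ⟨h, hh, _⟩ := hnet f hf
  simp [this] at hh

lemma covN_attained {α : Type*} (ε : ℝ) (F : Set α) (d : α → α → ℝ)
    (hfin : covN ε F d ≠ ⊤) :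
    ∃ H : Finset α, ↑H ⊆ F ∧ (∀ f ∈ F, ∃ h ∈ H, d f h ≤ ε) ∧
      (H.card : ℕ∞) = covN ε F d := by
  have hlt : covN ε F d < covN ε F d + 1 := by
    exact (ENat.lt_add_one_iff hfin).mpr le_rfl
  obtain ⟨m, hm, hm1⟩ := sInf_lt_iff.mp hlt
  obtain ⟨H, hsub, hnet, hcard⟩ := hm
  refine ⟨H, hsub, hnet, ?_⟩
  have h1 : m ≤ covN ε F d := (ENat.lt_add_one_iff hfin).mp hm1
  have h2 : covN ε F d ≤ m := sInf_le ⟨H, hsub, hnet, hcard⟩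
  rw [hcard]; exact le_antisymm h1 h2

theorem covN_pws_inf {X : Type*} (C n : ℕ) (hC : 0 < C) (hn : 0 < n)
    (F : Fin C → Set (X → ℝ)) (G : Set (X → Fin C)) (x : Fin n → X)
    (ε : ℝ) (hε : 0 < ε) :
    covN ε
      {f : X → ℝ | ∃ g ∈ G, ∃ fk : Fin C → X → ℝ, (∀ k, fk k ∈ F k) ∧
        f = fun w => fk (g w) w}
      (empDistInf x)
      ≤ (Set.ncard {c : Fin n → Fin C | ∃ g ∈ G, c = fun i => g (x i)} : ℕ∞) *
          ∏ k : Fin C, covN ε (F k) (empDistInf x) := by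
  classical
  set FG : Set (X → ℝ) := {f : X → ℝ | ∃ g ∈ G, ∃ fk : Fin C → X → ℝ,
    (∀ k, fk k ∈ F k) ∧ f = fun w => fk (g w) w} with hFG
  set T : Set (Fin n → Fin C) := {c | ∃ g ∈ G, c = fun i => g (x i)} with hT
  by_cases hGne : G.Nonempty
  swap
  · have : FG = ∅ := by
      ext f; simp only [hFG, Set.mem_setOf_eq, Set.mem_empty_iff_false, iff_false]
      rintro ⟨g, hg, _⟩
      exact hGne ⟨g, hg⟩
    rw [this, covN_empty]; exact zero_le
  by_cases hFne : ∀ k, (F k).Nonempty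
  swap
  · push_neg at hFne
    obtain ⟨k0, hk0⟩ := hFne
    have : FG = ∅ := by
      ext f; simp only [hFG, Set.mem_setOf_eq, Set.mem_empty_iff_false, iff_false]
      rintro ⟨g, hg, fk, hfk, _⟩
      have := hfk k0; rw [hk0] at this; exact this
    rw [this, covN_empty]; exact zero_le
  -- T is finite and nonempty
  have hTfin : T.Finite := Set.toFinite T
  have hTne : T.Nonempty := by
    obtain ⟨g, hg⟩ := hGne
    exact ⟨fun i => g (x i), g, hg, rfl⟩
  by_cases hfin : ∀ k, covN ε (F k) (empDistInf x) ≠ ⊤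
  swap
  · push_neg at hfin
    obtain ⟨k0, hk0⟩ := hfin
    have hprod : ∏ k : Fin C, covN ε (F k) (empDistInf x) = ⊤ := by
      refine top_unique ?_
      rw [← hk0]
      exact Finset.single_le_prod' (fun k _ =>
        ENat.one_le_iff_ne_zero.mpr (covN_ne_zero ε (F k) _ (hFne k))) (Finset.mem_univ k0)
    rw [hprod, ENat.mul_top]
    · exact le_top
    · simp only [ne_eq, Nat.cast_eq_zero]
      exact (Set.ncard_pos hTfin).mpr hTne |>.ne'
  -- choose optimal nets
  choose Hk hHsub hHnet hHcard using fun k => covN_attained ε (F k) (empDistInf x) (hfin k)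
  -- selector for traces
  have hne : Nonempty (Fin C) := ⟨⟨0, hC⟩⟩
  set gsel : (Fin n → Fin C) → X → Fin C := fun c =>
    if hc : ∃ g ∈ G, c = fun i => g (x i) then hc.choose else fun _ => ⟨0, hC⟩ with hgsel
  have hgselG : ∀ c ∈ T, gsel c ∈ G := by
    intro c hc
    have he : gsel c = hc.choose := dif_pos hc
    rw [he]; exact hc.choose_spec.1
  have hgselT : ∀ c ∈ T, c = fun i => gsel c (x i) := by
    intro c hc
    have he : gsel c = hc.choose := dif_pos hc
    rw [he]; exact hc.choose_spec.2
  set HB : Finset (X → ℝ) :=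
    (hTfin.toFinset ×ˢ Fintype.piFinset Hk).image
      (fun p => fun w => p.2 (gsel p.1 w) w) with hHB
  have hBsub : ↑HB ⊆ FG := by
    intro f hf
    simp only [hHB, Finset.coe_image, Set.mem_image, Finset.mem_coe, Finset.mem_product,
      Fintype.mem_piFinset] at hf
    obtain ⟨⟨c, h⟩, ⟨hcT, hh⟩, rfl⟩ := hf
    rw [Set.Finite.mem_toFinset] at hcT
    exact ⟨gsel c, hgselG c hcT, h, fun k => hHsub k (hh k), rfl⟩
  have hBnet : ∀ f ∈ FG, ∃ h ∈ HB, empDistInf x f h ≤ ε := by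
    rintro f ⟨g, hg, fk, hfk, rfl⟩
    set c : Fin n → Fin C := fun i => g (x i) with hc
    have hcT : c ∈ T := ⟨g, hg, rfl⟩
    choose h hhmem hhdist using fun k => hHnet k (fk k) (hfk k)
    refine ⟨fun w => h (gsel c w) w, ?_, ?_⟩
    · simp only [hHB, Finset.mem_image]
      exact ⟨(c, h), Finset.mem_product.mpr ⟨hTfin.mem_toFinset.mpr hcT,
        Fintype.mem_piFinset.mpr hhmem⟩, rfl⟩
    · haveI : Nonempty (Fin n) := ⟨⟨0, hn⟩⟩
      refine ciSup_le fun i => ?_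
      have hci : gsel c (x i) = g (x i) := (congrFun (hgselT c hcT) i).symm
      show |fk (g (x i)) (x i) - h (gsel c (x i)) (x i)| ≤ ε
      rw [hci]
      calc |fk (g (x i)) (x i) - h (g (x i)) (x i)|
          ≤ ⨆ j, |fk (g (x i)) (x j) - h (g (x i)) (x j)| :=
            le_ciSup (f := fun j => |fk (g (x i)) (x j) - h (g (x i)) (x j)|)
              ((Set.finite_range _).bddAbove) i
        _ = empDistInf x (fk (g (x i))) (h (g (x i))) := rfl
        _ ≤ ε := hhdist (g (x i))
  calc covN ε FG (empDistInf x) ≤ HB.card := covN_le_card _ _ _ HB hBsub hBnet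
    _ ≤ ((hTfin.toFinset.card * ∏ k, (Hk k).card : ℕ) : ℕ∞) := by
        have h1 : HB.card ≤ hTfin.toFinset.card * ∏ k, (Hk k).card :=
          le_trans Finset.card_image_le
            (le_of_eq (by rw [Finset.card_product, Fintype.card_piFinset]))
        exact_mod_cast h1
    _ = (T.ncard : ℕ∞) * ∏ k : Fin C, covN ε (F k) (empDistInf x) := by
        push_cast
        rw [Set.ncard_eq_toFinset_card T hTfin]
        congr 1
        exact Finset.prod_congr rfl fun k _ => hHcard k
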